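/- Let U be a finite set with |U| = 2^n, and for each 0 ≤ i ≤ n-2 let P_i : U^{i+2} → {0,1} be arbitrary functions. Then there exists a sequence of n+1 distinct elements a_0, ..., a_n of U such that for every i ≤ n-2 and every j > i, the value P_i(a_0, ..., a_i, a_j) is the same (depends only on i). -/

import Mathlib

private lemma longChoice_key {U : Type} [DecidableEq U] :
    ∀ (m : ℕ) (S : Finset U), 2 ^ m ≤ S.card →
    ∀ (Q : ∀ i : Fin m, (Fin (i.1 + 1) → U) → U → Bool),
    ∃ a : Fin (m + 1) → U, Function.Injective a ∧ (∀ j, a j ∈ S) ∧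
      ∀ (i : Fin m) (j k : Fin (m + 1)), i.1 < j.1 → i.1 < k.1 →
        Q i (fun t => a ⟨t.1, by have := t.isLt; have := i.isLt; omega⟩) (a j) =
        Q i (fun t => a ⟨t.1, by have := t.isLt; have := i.isLt; omega⟩) (a k) := by
  intro m
  induction m with
  | zero =>
    intro S hS Q
    have : 0 < S.card := by simpa using hS
    obtain ⟨x, hx⟩ := Finset.card_pos.mp this
    refine ⟨fun _ => x, ?_, fun _ => hx, fun i => absurd i.isLt (by omega)⟩
    intro a b _
    exact Fin.ext (by omega)
  | succ m ih =>
    intro S hS Q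
    have hpos : 0 < S.card := lt_of_lt_of_le (by positivity) hS
    obtain ⟨x, hx⟩ := Finset.card_pos.mp hpos
    have herase : (S.erase x).card = S.card - 1 := Finset.card_erase_of_mem hx
    obtain ⟨b, hb⟩ : ∃ b, 2 ^ m ≤
        ((S.erase x).filter (fun u => Q 0 (fun _ => x) u = b)).card := by
      by_contra h
      push_neg at h
      have h1 := h true
      have h2 := h false
      have hsum : ((S.erase x).filter (fun u => Q 0 (fun _ => x) u = true)).card
          + ((S.erase x).filter (fun u => Q 0 (fun _ => x) u = false)).card
          = (S.erase x).card := by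
        have := Finset.card_filter_add_card_filter_not
          (s := S.erase x) (p := fun u => Q 0 (fun _ => x) u = true)
        simp only [Bool.not_eq_true] at this
        convert this
      have hpow : 2 ^ (m + 1) = 2 ^ m + 2 ^ m := by ring
      omega
    set T : Finset U := (S.erase x).filter (fun u => Q 0 (fun _ => x) u = b) with hT
    obtain ⟨c, hc_inj, hc_mem, hc_prop⟩ := ih T hb
      (fun i pre u => Q i.succ (Fin.cons x pre) u)
    have hcS : ∀ j, c j ∈ S := by
      intro j
      have := hc_mem j
      rw [hT] at this
      exact Finset.mem_of_mem_erase (Finset.mem_of_mem_filter _ this)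
    have hcx : ∀ j, c j ≠ x := by
      intro j hj
      have := hc_mem j
      rw [hT, Finset.mem_filter, Finset.mem_erase] at this
      exact this.1.1 hj
    have hcb : ∀ j, Q 0 (fun _ => x) (c j) = b := by
      intro j
      have := hc_mem j
      rw [hT, Finset.mem_filter] at this
      exact this.2
    refine ⟨Fin.cons x c, ?_, ?_, ?_⟩
    · intro j k hjk
      induction j using Fin.cases with
      | zero =>
        induction k using Fin.cases with
        | zero => rfl
        | succ k' =>
          simp only [Fin.cons_zero, Fin.cons_succ] at hjk
          exact absurd hjk.symm (hcx k')
      | succ j' =>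
        induction k using Fin.cases with
        | zero =>
          simp only [Fin.cons_zero, Fin.cons_succ] at hjk
          exact absurd hjk (hcx j')
        | succ k' =>
          simp only [Fin.cons_succ] at hjk
          exact congrArg Fin.succ (hc_inj hjk)
    · intro j
      induction j using Fin.cases with
      | zero => simpa using hx
      | succ j' => simpa using hcS j'
    · intro i j k hij hik
      obtain ⟨iv, hiv⟩ := i
      obtain ⟨jv, hjv⟩ := j
      obtain ⟨kv, hkv⟩ := k
      have hij' : iv < jv := hij
      have hik' : iv < kv := hik
      obtain ⟨jv', rfl⟩ : ∃ jv', jv = jv' + 1 := ⟨jv - 1, by omega⟩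
      obtain ⟨kv', rfl⟩ : ∃ kv', kv = kv' + 1 := ⟨kv - 1, by omega⟩
      cases iv with
      | zero =>
        have hpre : (fun t : Fin (0 + 1) =>
              (Fin.cons x c : Fin (m + 2) → U) ⟨t.1, by have := t.isLt; omega⟩)
            = (fun _ : Fin (0 + 1) => x) := by
          funext t
          obtain ⟨tv, htv⟩ := t
          have h0 : tv = 0 := by omega
          subst h0
          rfl
        show Q ⟨0, hiv⟩
            (fun t : Fin (0 + 1) =>
              (Fin.cons x c : Fin (m + 2) → U) ⟨t.1, by have := t.isLt; omega⟩)
            ((Fin.cons x c : Fin (m + 2) → U) ⟨jv' + 1, hjv⟩)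
          = Q ⟨0, hiv⟩
            (fun t : Fin (0 + 1) =>
              (Fin.cons x c : Fin (m + 2) → U) ⟨t.1, by have := t.isLt; omega⟩)
            ((Fin.cons x c : Fin (m + 2) → U) ⟨kv' + 1, hkv⟩)
        rw [hpre]
        show Q 0 (fun _ : Fin (0 + 1) => x) (c ⟨jv', by omega⟩)
          = Q 0 (fun _ : Fin (0 + 1) => x) (c ⟨kv', by omega⟩)
        exact (hcb _).trans (hcb _).symm
      | succ i' =>
        have hpre : (fun t : Fin (i' + 1 + 1) =>
              (Fin.cons x c : Fin (m + 2) → U)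
                ⟨t.1, by have := t.isLt; omega⟩)
            = Fin.cons x (fun t : Fin (i' + 1) =>
                c ⟨t.1, by have := t.isLt; omega⟩) := by
          funext t
          obtain ⟨tv, htv⟩ := t
          match tv, htv with
          | 0, htv => rfl
          | (tv' + 1), htv => rfl
        show Q ⟨i' + 1, hiv⟩
            (fun t : Fin (i' + 1 + 1) =>
              (Fin.cons x c : Fin (m + 2) → U) ⟨t.1, by have := t.isLt; omega⟩)
            ((Fin.cons x c : Fin (m + 2) → U) ⟨jv' + 1, hjv⟩)
          = Q ⟨i' + 1, hiv⟩
            (fun t : Fin (i' + 1 + 1) =>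
              (Fin.cons x c : Fin (m + 2) → U) ⟨t.1, by have := t.isLt; omega⟩)
            ((Fin.cons x c : Fin (m + 2) → U) ⟨kv' + 1, hkv⟩)
        rw [hpre]
        exact hc_prop ⟨i', by omega⟩ ⟨jv', by omega⟩ ⟨kv', by omega⟩
          (by exact (by omega : i' < jv')) (by exact (by omega : i' < kv'))

theorem longChoice_total {n : ℕ} {U : Type} [Fintype U]
    (hU : Fintype.card U = 2 ^ n)
    (P : ∀ i : Fin (n - 1), (Fin (i.1 + 1) → U) → U → Bool) :
    ∃ a : Fin (n + 1) → U, Function.Injective a ∧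
      ∀ (i : Fin (n - 1)) (j k : Fin (n + 1)), i.1 < j.1 → i.1 < k.1 →
        P i (fun t => a ⟨t.1, by have := t.isLt; have := i.isLt; omega⟩) (a j) =
        P i (fun t => a ⟨t.1, by have := t.isLt; have := i.isLt; omega⟩) (a k) := by
  classical
  set Q : ∀ i : Fin n, (Fin (i.1 + 1) → U) → U → Bool :=
    fun i pre u => if h : i.1 < n - 1 then P ⟨i.1, h⟩ pre u else true with hQ
  have hcard : 2 ^ n ≤ (Finset.univ : Finset U).card := by
    rw [Finset.card_univ, hU]
  obtain ⟨a, ha_inj, _, ha_prop⟩ := longChoice_key n Finset.univ hcard Q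
  refine ⟨a, ha_inj, ?_⟩
  intro i j k hij hik
  have hi : i.1 < n := by have := i.isLt; omega
  have := ha_prop ⟨i.1, hi⟩ j k hij hik
  rw [hQ] at this
  simp only [dif_pos i.isLt] at this
  exact this
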